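/- If (A_n) is a Markov sequence of events of order k with P(A_n) → 0, then P(limsup A_n) = 0 if ∑_{n=1}^∞ P(A_n^c ∩ ... ∩ A_{n+k-1}^c ∩ A_{n+k}) < ∞, and P(limsup A_n) = 1 if this series diverges. -/

import Mathlib

open MeasureTheory Filter
open scoped ENNReal

/-- `A` is a Markov sequence of events of order `k`: the indicators `1_{A n}` form a
Markov chain of order `k`.  Elementary formulation: conditionally on any cylinder
event determined by `A 0, …, A n` (each taken either as itself or its complement),
the conditional probability of `A (n+1)` depends only on the last `k` coordinates. -/
def IsMarkovSeqOrder {Ω : Type*} [MeasurableSpace Ω] (μ : Measure Ω) (k : ℕ)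
    (A : ℕ → Set Ω) : Prop :=
  ∀ n : ℕ, k ≤ n → ∀ B : ℕ → Set Ω, (∀ i, i ≤ n → B i = A i ∨ B i = (A i)ᶜ) →
    μ (⋂ i ∈ Finset.range (n + 1), B i) ≠ 0 →
    μ (A (n + 1) ∩ ⋂ i ∈ Finset.range (n + 1), B i) * μ (⋂ i ∈ Finset.Icc (n + 1 - k) n, B i)
      = μ (A (n + 1) ∩ ⋂ i ∈ Finset.Icc (n + 1 - k) n, B i)
        * μ (⋂ i ∈ Finset.range (n + 1), B i)

/-- Elementary product estimate in `ℝ≥0∞`. -/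
lemma aux_prod_le_inv (p : ℕ → ℝ≥0∞) (hp : ∀ j, p j ≤ 1) (t : ℕ) :
    ∏ j ∈ Finset.range t, (1 - p j) ≤ (1 + ∑ j ∈ Finset.range t, p j)⁻¹ := by
  induction t with
  | zero => simp
  | succ t ih =>
    rw [Finset.prod_range_succ, Finset.sum_range_succ]
    have h1 : (1 - p t) ≤ (1 + p t)⁻¹ := by
      rw [ENNReal.le_inv_iff_mul_le]
      calc (1 - p t) * (1 + p t) = (1 - p t) + (1 - p t) * p t := by
            rw [mul_add, mul_one]
        _ ≤ (1 - p t) + p t := by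
            gcongr
            calc (1 - p t) * p t ≤ 1 * p t := by gcongr; exact tsub_le_self
              _ = p t := one_mul _
        _ = 1 := tsub_add_cancel_of_le (hp t)
    calc (∏ j ∈ Finset.range t, (1 - p j)) * (1 - p t)
        ≤ (1 + ∑ j ∈ Finset.range t, p j)⁻¹ * (1 + p t)⁻¹ := mul_le_mul' ih h1
      _ = ((1 + ∑ j ∈ Finset.range t, p j) * (1 + p t))⁻¹ := by
          rw [ENNReal.mul_inv (Or.inl (by simp)) (Or.inr (by simp))]
      _ ≤ (1 + (∑ j ∈ Finset.range t, p j + p t))⁻¹ := by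
          rw [ENNReal.inv_le_inv]
          calc 1 + (∑ j ∈ Finset.range t, p j + p t)
              ≤ 1 + (∑ j ∈ Finset.range t, p j + p t)
                + (∑ j ∈ Finset.range t, p j) * p t := le_add_right le_rfl
            _ = (1 + ∑ j ∈ Finset.range t, p j) * (1 + p t) := by ring

section Main

variable {Ω : Type*} [MeasurableSpace Ω] {μ : Measure Ω} [IsProbabilityMeasure μ]
  {k : ℕ} {A : ℕ → Set Ω}

/-- One conditioning step. -/
lemma aux_step (hmeas : ∀ n, MeasurableSet (A n)) (hMarkov : IsMarkovSeqOrder μ k A)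
    {N : ℕ} (P : ℕ → Set Ω) (hP : ∀ i, P i = A i ∨ P i = (A i)ᶜ)
    (hP2 : ∀ i, N ≤ i → P i = (A i)ᶜ) {n : ℕ} (hk : k ≤ n) (hNk : N + k ≤ n + 1) :
    μ (⋂ i ∈ Finset.range (n + 2), P i)
      ≤ (1 - μ ((⋂ i ∈ Finset.range k, (A (n + 1 - k + i))ᶜ) ∩ A (n + 1 - k + k)))
        * μ (⋂ i ∈ Finset.range (n + 1), P i) := by
  have hsub : (⋂ i ∈ Finset.range (n + 2), P i) ⊆ ⋂ i ∈ Finset.range (n + 1), P i := by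
    intro x hx
    simp only [Set.mem_iInter, Finset.mem_range] at hx ⊢
    intro i hi
    exact hx i (by omega)
  by_cases hc : μ (⋂ i ∈ Finset.range (n + 1), P i) = 0
  · refine le_trans (measure_mono hsub) ?_
    rw [hc]
    exact zero_le
  have hmk := hMarkov n hk P (fun i _ => hP i) hc
  have hm : n + 1 - k + k = n + 1 := by omega
  have hSeq : (⋂ i ∈ Finset.Icc (n + 1 - k) n, P i)
      = ⋂ i ∈ Finset.range k, (A (n + 1 - k + i))ᶜ := by
    ext x
    simp only [Set.mem_iInter, Finset.mem_Icc, Finset.mem_range, and_imp]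
    constructor
    · intro h j hj
      have h1 := h (n + 1 - k + j) (by omega) (by omega)
      rwa [hP2 _ (by omega)] at h1
    · intro h i hi1 hi2
      rw [hP2 _ (by omega)]
      have h1 := h (i - (n + 1 - k)) (by omega)
      rwa [show n + 1 - k + (i - (n + 1 - k)) = i by omega] at h1
  have hA1S : A (n + 1) ∩ (⋂ i ∈ Finset.Icc (n + 1 - k) n, P i)
      = (⋂ i ∈ Finset.range k, (A (n + 1 - k + i))ᶜ) ∩ A (n + 1 - k + k) := by
    rw [hSeq, hm, Set.inter_comm]
  have hP1 : P (n + 1) = (A (n + 1))ᶜ := hP2 _ (by omega)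
  have hsplit : (⋂ i ∈ Finset.range (n + 2), P i)
      = (A (n + 1))ᶜ ∩ ⋂ i ∈ Finset.range (n + 1), P i := by
    rw [show n + 2 = n + 1 + 1 from rfl, Finset.range_add_one, Finset.set_biInter_insert, hP1]
  have hcompl : ∀ X : Set Ω, μ (A (n + 1) ∩ X) + μ ((A (n + 1))ᶜ ∩ X) = μ X := by
    intro X
    rw [Set.inter_comm, Set.inter_comm ((A (n + 1))ᶜ), ← Set.diff_eq]
    exact measure_inter_add_diff X (hmeas (n + 1))
  set C := ⋂ i ∈ Finset.range (n + 1), P i with hCdef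
  set S := ⋂ i ∈ Finset.Icc (n + 1 - k) n, P i with hSdef
  have hCS : C ⊆ S := by
    intro x hx
    rw [hCdef] at hx
    rw [hSdef]
    simp only [Set.mem_iInter, Finset.mem_Icc, Finset.mem_range, and_imp] at hx ⊢
    intro i hi1 hi2
    exact hx i (by omega)
  have hs0 : μ S ≠ 0 := by
    intro h
    exact hc (le_antisymm (h ▸ measure_mono hCS) (zero_le))
  have hsfin : μ S ≠ ⊤ := measure_ne_top μ S
  have key : μ ((A (n + 1))ᶜ ∩ C) * μ S = μ ((A (n + 1))ᶜ ∩ S) * μ C := by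
    have h2 : μ (A (n + 1) ∩ C) * μ S + μ ((A (n + 1))ᶜ ∩ C) * μ S
        = μ (A (n + 1) ∩ C) * μ S + μ ((A (n + 1))ᶜ ∩ S) * μ C := by
      calc μ (A (n + 1) ∩ C) * μ S + μ ((A (n + 1))ᶜ ∩ C) * μ S
          = (μ (A (n + 1) ∩ C) + μ ((A (n + 1))ᶜ ∩ C)) * μ S := (add_mul _ _ _).symm
        _ = μ C * μ S := by rw [hcompl C]
        _ = (μ (A (n + 1) ∩ S) + μ ((A (n + 1))ᶜ ∩ S)) * μ C := by
            rw [hcompl S, mul_comm]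
        _ = μ (A (n + 1) ∩ S) * μ C + μ ((A (n + 1))ᶜ ∩ S) * μ C := add_mul _ _ _
        _ = μ (A (n + 1) ∩ C) * μ S + μ ((A (n + 1))ᶜ ∩ S) * μ C := by rw [hmk]
    exact (ENNReal.add_right_inj (ENNReal.mul_ne_top (measure_ne_top μ _)
      (measure_ne_top μ _))).1 h2
  have hb' : μ ((A (n + 1))ᶜ ∩ S) = μ S - μ (A (n + 1) ∩ S) := by
    rw [← hcompl S, ENNReal.add_sub_cancel_left (measure_ne_top μ _)]
  rw [hsplit, ← hA1S]
  rw [← ENNReal.mul_le_mul_iff_left hs0 hsfin, key, hb']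
  calc (μ S - μ (A (n + 1) ∩ S)) * μ C
      ≤ ((1 - μ (A (n + 1) ∩ S)) * μ S) * μ C := by
        gcongr
        rw [ENNReal.sub_mul (fun _ _ => hsfin), one_mul]
        refine tsub_le_tsub_left ?_ _
        calc μ (A (n + 1) ∩ S) * μ S ≤ μ (A (n + 1) ∩ S) * 1 := by
              gcongr
              exact prob_le_one
          _ = μ (A (n + 1) ∩ S) := mul_one _
    _ = (1 - μ (A (n + 1) ∩ S)) * μ C * μ S := by ring

/-- Iterated bound. -/
lemma aux_iter (hmeas : ∀ n, MeasurableSet (A n)) (hMarkov : IsMarkovSeqOrder μ k A)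
    {N : ℕ} (hN : 1 ≤ N) (P : ℕ → Set Ω) (hP : ∀ i, P i = A i ∨ P i = (A i)ᶜ)
    (hP2 : ∀ i, N ≤ i → P i = (A i)ᶜ) (t : ℕ) :
    μ (⋂ i ∈ Finset.range (N + k + t), P i)
      ≤ ∏ j ∈ Finset.range t,
          (1 - μ ((⋂ i ∈ Finset.range k, (A (N + j + i))ᶜ) ∩ A (N + j + k))) := by
  induction t with
  | zero => simpa using prob_le_one
  | succ t ih =>
    obtain ⟨n, hn⟩ : ∃ n, N + k + t = n + 1 := ⟨N + k + t - 1, by omega⟩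
    have hstep := aux_step hmeas hMarkov (N := N) P hP hP2 (n := n) (by omega) (by omega)
    rw [show n + 1 - k = N + t by omega] at hstep
    calc μ (⋂ i ∈ Finset.range (N + k + (t + 1)), P i)
        = μ (⋂ i ∈ Finset.range (n + 2), P i) := by
          rw [show N + k + (t + 1) = n + 2 by omega]
      _ ≤ (1 - μ ((⋂ i ∈ Finset.range k, (A (N + t + i))ᶜ) ∩ A (N + t + k)))
          * μ (⋂ i ∈ Finset.range (n + 1), P i) := hstep
      _ ≤ (1 - μ ((⋂ i ∈ Finset.range k, (A (N + t + i))ᶜ) ∩ A (N + t + k)))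
          * ∏ j ∈ Finset.range t,
              (1 - μ ((⋂ i ∈ Finset.range k, (A (N + j + i))ᶜ) ∩ A (N + j + k))) := by
          rw [hn] at ih
          exact mul_le_mul_right ih _
      _ = _ := by rw [Finset.prod_range_succ, mul_comm]

/-- The tail event `⋂_{n ≥ N} Aₙᶜ` is null when the series diverges. -/
lemma aux_DN_null (hmeas : ∀ n, MeasurableSet (A n)) (hMarkov : IsMarkovSeqOrder μ k A)
    (hdiv : ∑' n : ℕ, μ ((⋂ i ∈ Finset.range k, (A (n + i))ᶜ) ∩ A (n + k)) = ⊤)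
    {N : ℕ} (hN : 1 ≤ N) :
    μ (⋂ n, ⋂ (_ : N ≤ n), (A n)ᶜ) = 0 := by
  classical
  set f : ℕ → ℝ≥0∞ := fun m => μ ((⋂ i ∈ Finset.range k, (A (m + i))ᶜ) ∩ A (m + k)) with hf
  set D := ⋂ n, ⋂ (_ : N ≤ n), (A n)ᶜ with hD
  have hsum : ∑' j : ℕ, f (N + j) = ⊤ := by
    have h1 := Summable.sum_add_tsum_nat_add' (f := f) (k := N) ENNReal.summable
    rw [hdiv] at h1
    have h2 : ∑ i ∈ Finset.range N, f i ≠ ⊤ :=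
      (ENNReal.sum_lt_top.2 fun i _ => measure_lt_top μ _).ne
    have h3 : ∑' i : ℕ, f (i + N) = ⊤ := by
      rcases ENNReal.add_eq_top.1 h1 with h | h
      · exact absurd h h2
      · exact h
    rw [← h3]
    exact tsum_congr fun j => by rw [add_comm]
  have htend : Tendsto (fun t => (1 + ∑ j ∈ Finset.range t, f (N + j))⁻¹) atTop (nhds 0) := by
    rw [← ENNReal.inv_top]
    refine ENNReal.tendsto_inv_iff.2 ?_
    have h4 : Tendsto (fun t => ∑ j ∈ Finset.range t, f (N + j)) atTop (nhds ⊤) := by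
      have h := ENNReal.tendsto_nat_tsum fun j => f (N + j)
      rwa [hsum] at h
    have h5 := (tendsto_const_nhds (x := (1 : ℝ≥0∞)) (f := atTop (α := ℕ))).add h4
    simpa using h5
  have key : ∀ s : Finset ℕ,
      μ ((⋂ i ∈ Finset.range N, (if i < N ∧ i ∈ s then A i else (A i)ᶜ)) ∩ D) = 0 := by
    intro s
    set P : ℕ → Set Ω := fun i => if i < N ∧ i ∈ s then A i else (A i)ᶜ with hPdef
    have hP : ∀ i, P i = A i ∨ P i = (A i)ᶜ := by
      intro i
      by_cases h : i < N ∧ i ∈ s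
      · exact Or.inl (if_pos h)
      · exact Or.inr (if_neg h)
    have hP2 : ∀ i, N ≤ i → P i = (A i)ᶜ := fun i hi =>
      if_neg fun h => absurd h.1 (by omega)
    have hsub : ∀ t, ((⋂ i ∈ Finset.range N, P i) ∩ D) ⊆ ⋂ i ∈ Finset.range (N + k + t), P i := by
      intro t x hx
      simp only [Set.mem_iInter, Finset.mem_range]
      intro i hi
      by_cases h : i < N
      · exact Set.mem_iInter₂.1 hx.1 i (Finset.mem_range.2 h)
      · rw [hP2 i (by omega)]
        exact Set.mem_iInter₂.1 hx.2 i (by omega)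
    have hb : ∀ t, μ ((⋂ i ∈ Finset.range N, P i) ∩ D)
        ≤ (1 + ∑ j ∈ Finset.range t, f (N + j))⁻¹ := by
      intro t
      refine le_trans (measure_mono (hsub t)) (le_trans
        (aux_iter hmeas hMarkov hN P hP hP2 t) ?_)
      exact aux_prod_le_inv (fun j => f (N + j)) (fun j => prob_le_one) t
    refine le_antisymm ?_ (zero_le)
    exact ge_of_tendsto htend (Eventually.of_forall hb)
  have hcover : D ⊆ ⋃ s : Finset ℕ,
      ((⋂ i ∈ Finset.range N, (if i < N ∧ i ∈ s then A i else (A i)ᶜ)) ∩ D) := by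
    intro x hx
    refine Set.mem_iUnion.2 ⟨(Finset.range N).filter (fun i => x ∈ A i), ?_, hx⟩
    refine Set.mem_iInter₂.2 fun i hi => ?_
    by_cases h : x ∈ A i
    · rw [if_pos ⟨Finset.mem_range.1 hi, Finset.mem_filter.2 ⟨hi, h⟩⟩]
      exact h
    · have hni : ¬ (i < N ∧ i ∈ (Finset.range N).filter (fun i => x ∈ A i)) := by
        rintro ⟨-, hmem⟩
        exact h (Finset.mem_filter.1 hmem).2
      rw [if_neg hni]
      exact h
  exact le_antisymm (le_trans (measure_mono hcover)
    (le_of_eq (measure_iUnion_null key))) (zero_le)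

end Main

theorem stmt6 {Ω : Type*} [MeasurableSpace Ω] (μ : Measure Ω) [IsProbabilityMeasure μ]
    (k : ℕ) (A : ℕ → Set Ω) (hmeas : ∀ n, MeasurableSet (A n))
    (hMarkov : IsMarkovSeqOrder μ k A)
    (h0 : Tendsto (fun n => μ (A n)) atTop (nhds 0)) :
    (∑' n : ℕ, μ ((⋂ i ∈ Finset.range k, (A (n + i))ᶜ) ∩ A (n + k)) ≠ ⊤ →
      μ (limsup A atTop) = 0) ∧
    (∑' n : ℕ, μ ((⋂ i ∈ Finset.range k, (A (n + i))ᶜ) ∩ A (n + k)) = ⊤ →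
      μ (limsup A atTop) = 1) := by
  classical
  constructor
  · intro hconv
    set Bs : ℕ → Set Ω := fun n => (⋂ i ∈ Finset.range k, (A (n + i))ᶜ) ∩ A (n + k) with hBs
    have hBC : μ (limsup Bs atTop) = 0 := measure_limsup_atTop_eq_zero hconv
    have hL : ∀ N : ℕ, μ (⋂ m, ⋂ (_ : N ≤ m), ⋃ i ∈ Finset.range (k + 1), A (m + i)) = 0 := by
      intro N
      refine le_antisymm ?_ (zero_le)
      have htend : Tendsto (fun m => ∑ i ∈ Finset.range (k + 1), μ (A (m + i))) atTop
          (nhds 0) := by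
        have h := tendsto_finset_sum (Finset.range (k + 1))
          (fun i _ => h0.comp (tendsto_add_atTop_nat i))
        simpa using h
      refine ge_of_tendsto htend ?_
      filter_upwards [eventually_ge_atTop N] with m hm
      calc μ (⋂ m', ⋂ (_ : N ≤ m'), ⋃ i ∈ Finset.range (k + 1), A (m' + i))
          ≤ μ (⋃ i ∈ Finset.range (k + 1), A (m + i)) :=
            measure_mono (Set.iInter₂_subset m hm)
        _ ≤ ∑ i ∈ Finset.range (k + 1), μ (A (m + i)) := measure_biUnion_finset_le _ _
    have hincl : limsup A atTop ⊆ limsup Bs atTop ∪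
        ⋃ N : ℕ, ⋂ m, ⋂ (_ : N ≤ m), ⋃ i ∈ Finset.range (k + 1), A (m + i) := by
      intro x hx
      by_cases hxB : x ∈ limsup Bs atTop
      · exact Or.inl hxB
      right
      have hfx : ∀ m : ℕ, ∃ j, m ≤ j ∧ x ∈ A j := by
        have h := frequently_atTop.1 (mem_limsup_iff_frequently_mem.1 hx)
        intro m
        obtain ⟨j, hj1, hj2⟩ := h m
        exact ⟨j, hj1, hj2⟩
      have hnB : ∀ᶠ n in atTop, x ∉ Bs n :=
        not_frequently.1 fun h => hxB (mem_limsup_iff_frequently_mem.2 h)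
      obtain ⟨N₀, hN₀⟩ := eventually_atTop.1 hnB
      refine Set.mem_iUnion.2 ⟨N₀, Set.mem_iInter₂.2 fun m hm => ?_⟩
      by_contra hcon
      have hnot : ∀ i, i ≤ k → x ∉ A (m + i) := by
        intro i hi hbad
        exact hcon (Set.mem_biUnion (Finset.mem_range.2 (by omega)) hbad)
      have hex : ∃ j, m ≤ j ∧ x ∈ A j := hfx m
      obtain ⟨hj1, hj2⟩ := Nat.find_spec hex
      set j := Nat.find hex with hjdef
      have hmin : ∀ i, m ≤ i → i < j → x ∉ A i := fun i h1 h2 hbad =>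
        Nat.find_min hex h2 ⟨h1, hbad⟩
      have hjk : m + k < j := by
        by_contra hle
        push_neg at hle
        exact hnot (j - m) (by omega) (by rwa [show m + (j - m) = j by omega])
      have hxB2 : x ∈ Bs (j - k) := by
        constructor
        · refine Set.mem_iInter₂.2 fun i hi => ?_
          have hik : i < k := Finset.mem_range.1 hi
          exact hmin (j - k + i) (by omega) (by omega)
        · rw [show j - k + k = j by omega]
          exact hj2
      exact hN₀ (j - k) (by omega) hxB2
    refine le_antisymm ?_ (zero_le)
    calc μ (limsup A atTop)
        ≤ μ (limsup Bs atTop ∪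
            ⋃ N : ℕ, ⋂ m, ⋂ (_ : N ≤ m), ⋃ i ∈ Finset.range (k + 1), A (m + i)) :=
          measure_mono hincl
      _ ≤ μ (limsup Bs atTop) +
            μ (⋃ N : ℕ, ⋂ m, ⋂ (_ : N ≤ m), ⋃ i ∈ Finset.range (k + 1), A (m + i)) :=
          measure_union_le _ _
      _ = 0 := by rw [hBC, measure_iUnion_null hL, add_zero]
  · intro hdiv
    rw [← prob_compl_eq_zero_iff (MeasurableSet.measurableSet_limsup hmeas)]
    have hsub : (limsup A atTop)ᶜ ⊆ ⋃ N : ℕ, ⋂ n, ⋂ (_ : N + 1 ≤ n), (A n)ᶜ := by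
      intro x hx
      have hx' : ¬ ∃ᶠ n in atTop, x ∈ A n := fun h =>
        hx (mem_limsup_iff_frequently_mem.2 h)
      obtain ⟨N, hN⟩ := eventually_atTop.1 (not_frequently.1 hx')
      exact Set.mem_iUnion.2 ⟨N, Set.mem_iInter₂.2 fun n hn => hN n (by omega)⟩
    refine le_antisymm (le_trans (measure_mono hsub)
      (le_of_eq (measure_iUnion_null fun N =>
        aux_DN_null hmeas hMarkov hdiv (N := N + 1) (by omega)))) (zero_le)
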